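/- Let z = x + iy be a complex number with x ≠ 0 or y² ≤ 1, let ρ₁ = |z−i|, ρ₂ = |z+i|, a = (ρ₁+ρ₂)/2, b = (ρ₂−ρ₁)/2, and let T(z) = sign(x)·arcosh(a) + i·arcsin(b). Then sinh(T(z)) = z, where sinh is the complex hyperbolic sine function. -/

import Mathlib

open Complex

/-- Real inverse hyperbolic cosine, `arcosh t = ln (t + √(t²-1))`. -/
noncomputable def arcosh (t : ℝ) : ℝ := Real.log (t + Real.sqrt (t ^ 2 - 1))

/-- `a(w) = (|w-i| + |w+i|)/2`. -/
noncomputable def aF (w : ℂ) : ℝ :=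
  (‖w - Complex.I‖ + ‖w + Complex.I‖) / 2

/-- `b(w) = (|w+i| - |w-i|)/2`. -/
noncomputable def bF (w : ℂ) : ℝ :=
  (‖w + Complex.I‖ - ‖w - Complex.I‖) / 2

/-- Principal branch `T(w)` of the inverse hyperbolic sine on the cut plane
`ℂ ∖ ((-i∞,-i) ∪ (i,i∞))`. -/
noncomputable def T (w : ℂ) : ℂ :=
  (Real.sign w.re * arcosh (aF w) : ℝ) + Complex.I * (Real.arcsin (bF w) : ℝ)

lemma arcosh_inv_aux {t : ℝ} (ht : 1 ≤ t) :
    (t + Real.sqrt (t ^ 2 - 1))⁻¹ = t - Real.sqrt (t ^ 2 - 1) := by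
  have h0 : (0:ℝ) ≤ t ^ 2 - 1 := by nlinarith
  have hs : Real.sqrt (t ^ 2 - 1) ^ 2 = t ^ 2 - 1 := Real.sq_sqrt h0
  have hmul : (t + Real.sqrt (t ^ 2 - 1)) * (t - Real.sqrt (t ^ 2 - 1)) = 1 := by
    nlinarith [hs]
  exact inv_eq_of_mul_eq_one_right hmul

lemma arcosh_pos_aux {t : ℝ} (ht : 1 ≤ t) : 0 < t + Real.sqrt (t ^ 2 - 1) := by
  have := Real.sqrt_nonneg (t ^ 2 - 1); linarith

lemma cosh_arcosh {t : ℝ} (ht : 1 ≤ t) : Real.cosh (arcosh t) = t := by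
  rw [arcosh, Real.cosh_eq, Real.exp_neg, Real.exp_log (arcosh_pos_aux ht),
    arcosh_inv_aux ht]
  ring

lemma sinh_arcosh {t : ℝ} (ht : 1 ≤ t) :
    Real.sinh (arcosh t) = Real.sqrt (t ^ 2 - 1) := by
  rw [arcosh, Real.sinh_eq, Real.exp_neg, Real.exp_log (arcosh_pos_aux ht),
    arcosh_inv_aux ht]
  ring

set_option maxHeartbeats 2000000 in
theorem stmt14 (z : ℂ) (h : z.re ≠ 0 ∨ z.im ^ 2 ≤ 1) : Complex.sinh (T z) = z := by
  set x := z.re with hx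
  set y := z.im with hy
  set r1 := ‖z - Complex.I‖ with hr1
  set r2 := ‖z + Complex.I‖ with hr2
  have hr1n : 0 ≤ r1 := norm_nonneg _
  have hr2n : 0 ≤ r2 := norm_nonneg _
  have hr1sq : r1 ^ 2 = x ^ 2 + (y - 1) ^ 2 := by
    rw [hr1, Complex.sq_norm, Complex.normSq_apply]
    simp [Complex.sub_re, Complex.sub_im]
    ring
  have hr2sq : r2 ^ 2 = x ^ 2 + (y + 1) ^ 2 := by
    rw [hr2, Complex.sq_norm, Complex.normSq_apply]
    simp [Complex.add_re, Complex.add_im]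
    ring
  have htri : |r2 - r1| ≤ 2 := by
    have := abs_norm_sub_norm_le (z + Complex.I) (z - Complex.I)
    have h2 : (z + Complex.I) - (z - Complex.I) = 2 * Complex.I := by ring
    rw [h2] at this
    simpa using this
  have hsum : 2 ≤ r1 + r2 := by
    have := norm_add_le (Complex.I - z) (z + Complex.I)
    have h2 : (Complex.I - z) + (z + Complex.I) = 2 * Complex.I := by ring
    rw [h2] at this
    have h3 : ‖Complex.I - z‖ = r1 := by
      rw [hr1, ← norm_neg (z - Complex.I)]; ring_nf
    simp [h3, hr2.symm] at this
    simpa [h3] using this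
  set a := aF z with ha
  set b := bF z with hb
  have hav : a = (r1 + r2) / 2 := rfl
  have hbv : b = (r2 - r1) / 2 := rfl
  have ha1 : 1 ≤ a := by rw [hav]; linarith
  have hb1 : -1 ≤ b := by rw [hbv]; cases abs_le.1 htri; linarith
  have hb2 : b ≤ 1 := by rw [hbv]; cases abs_le.1 htri; linarith
  have hmul : a * b = y := by
    rw [hav, hbv]; nlinarith [hr1sq, hr2sq]
  have hsq : a ^ 2 + b ^ 2 = x ^ 2 + y ^ 2 + 1 := by
    rw [hav, hbv]; nlinarith [hr1sq, hr2sq]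
  -- expand sinh
  have hT : Complex.sinh (T z) =
      (Real.sinh (Real.sign x * arcosh a) * Real.cos (Real.arcsin b) : ℝ)
      + (Real.cosh (Real.sign x * arcosh a) * Real.sin (Real.arcsin b) : ℝ) * Complex.I := by
    rw [show T z = (↑(Real.sign x * arcosh a) + Complex.I * ↑(Real.arcsin b) : ℂ) from rfl,
      Complex.sinh_add, mul_comm Complex.I _, Complex.sinh_mul_I, Complex.cosh_mul_I,
      ← Complex.ofReal_sinh, ← Complex.ofReal_cosh, ← Complex.ofReal_cos, ← Complex.ofReal_sin]
    push_cast
    ring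
  rw [hT]
  clear_value x y r1 r2 a b
  have hsin : Real.sin (Real.arcsin b) = b := Real.sin_arcsin hb1 hb2
  have hcos : Real.cos (Real.arcsin b) = Real.sqrt (1 - b ^ 2) := Real.cos_arcsin b
  rcases eq_or_ne x 0 with hx0 | hx0
  · -- x = 0 case; then y² ≤ 1
    have hy1 : y ^ 2 ≤ 1 := h.resolve_left (by simp [hx0])
    have hby : b = y := by
      have h1 : r1 = 1 - y := by
        have hq : r1 ^ 2 = (1 - y) ^ 2 := by rw [hr1sq, hx0]; ring
        have h1y : 0 ≤ 1 - y := by nlinarith [sq_nonneg (1 - y), sq_nonneg (1 + y)]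
        calc r1 = Real.sqrt (r1 ^ 2) := (Real.sqrt_sq hr1n).symm
        _ = Real.sqrt ((1 - y) ^ 2) := by rw [hq]
        _ = 1 - y := Real.sqrt_sq h1y
      have h2 : r2 = 1 + y := by
        have hq : r2 ^ 2 = (1 + y) ^ 2 := by rw [hr2sq, hx0]; ring
        have h1y : 0 ≤ 1 + y := by nlinarith [sq_nonneg (1 - y), sq_nonneg (1 + y)]
        calc r2 = Real.sqrt (r2 ^ 2) := (Real.sqrt_sq hr2n).symm
        _ = Real.sqrt ((1 + y) ^ 2) := by rw [hq]
        _ = 1 + y := Real.sqrt_sq h1y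
      rw [hbv, h1, h2]; ring
    rw [hx0, Real.sign_zero, zero_mul, Real.sinh_zero, Real.cosh_zero, hsin, hby,
      zero_mul, one_mul]
    refine Complex.ext ?_ ?_ <;> simp [← hx, ← hy, hx0]
  · -- x ≠ 0 case
    have hcosh : Real.cosh (Real.sign x * arcosh a) = a := by
      rcases lt_or_gt_of_ne hx0 with hlt | hgt
      · rw [Real.sign_of_neg hlt]; simpa using cosh_arcosh ha1
      · rw [Real.sign_of_pos hgt]; simpa using cosh_arcosh ha1
    have hsinh : Real.sinh (Real.sign x * arcosh a) = Real.sign x * Real.sqrt (a ^ 2 - 1) := by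
      rcases lt_or_gt_of_ne hx0 with hlt | hgt
      · rw [Real.sign_of_neg hlt]; simp [Real.sinh_neg, sinh_arcosh ha1]
      · rw [Real.sign_of_pos hgt]; simp [sinh_arcosh ha1]
    have hprod : Real.sqrt (a ^ 2 - 1) * Real.sqrt (1 - b ^ 2) = |x| := by
      have hy2 : (a * b) ^ 2 = y ^ 2 := by rw [hmul]
      have ha0 : (0:ℝ) ≤ a ^ 2 - 1 := by nlinarith [ha1]
      rw [← Real.sqrt_mul ha0 (1 - b ^ 2)]
      have heq : (a ^ 2 - 1) * (1 - b ^ 2) = x ^ 2 := by linear_combination hsq - hy2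
      rw [heq, Real.sqrt_sq_eq_abs]
    have hre : Real.sinh (Real.sign x * arcosh a) * Real.cos (Real.arcsin b) = x := by
      rw [hsinh, hcos, mul_assoc, hprod]
      rcases lt_or_gt_of_ne hx0 with hlt | hgt
      · rw [Real.sign_of_neg hlt, abs_of_neg hlt]; ring
      · rw [Real.sign_of_pos hgt, abs_of_pos hgt]; ring
    have him : Real.cosh (Real.sign x * arcosh a) * Real.sin (Real.arcsin b) = y := by
      rw [hcosh, hsin, hmul]
    rw [hre, him]
    simp [Complex.ext_iff, ← hx, ← hy]
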